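/- The number of distinct sign vectors σ ∈ {−1, 0, +1}^m of the form σ(i) = sign(f_i(x)), ranging over all points x ∈ ℝ^d, where f_1, …, f_m are affine functions on ℝ^d, is at most ∑_{k=0}^{d} (m choose d−k) · ∑_{j=0}^{k} (m−d+k choose j); in particular it is O(m^d) for fixed d. -/

import Mathlib

open Finset

lemma buck_inner_id (m n : ℕ) :
    ∑ i ∈ range (n+1), m.choose i * (m - i).choose (n - i) = 2 ^ n * m.choose n := by
  have h : ∀ i ∈ range (n+1), m.choose i * (m-i).choose (n-i) = m.choose n * n.choose i := by
    intro i hi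
    simp only [mem_range] at hi
    have hin : i ≤ n := Nat.lt_succ_iff.mp hi
    by_cases hnm : n ≤ m
    · exact (Nat.choose_mul (n := m) hin).symm
    · push_neg at hnm
      rw [Nat.choose_eq_zero_of_lt hnm, zero_mul]
      rcases le_or_gt i m with h1 | h1
      · rw [Nat.choose_eq_zero_of_lt (show m - i < n - i by omega), mul_zero]
      · rw [Nat.choose_eq_zero_of_lt h1, zero_mul]
  rw [Finset.sum_congr rfl h, ← Finset.mul_sum, Nat.sum_range_choose, mul_comm]

lemma buck_G_eq (m d : ℕ) :
    ∑ i ∈ range (d+1), m.choose i * ∑ j ∈ range (d - i + 1), (m - i).choose j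
      = ∑ k ∈ range (d+1), 2^k * m.choose k := by
  induction d with
  | zero => simp
  | succ d ih =>
    rw [Finset.sum_range_succ]
    have hstep : ∀ i ∈ range (d+1),
        m.choose i * ∑ j ∈ range (d + 1 - i + 1), (m - i).choose j
          = m.choose i * ∑ j ∈ range (d - i + 1), (m - i).choose j
            + m.choose i * (m-i).choose (d+1-i) := by
      intro i hi
      simp only [mem_range] at hi
      have h1 : d + 1 - i + 1 = (d - i + 1) + 1 := by omega
      rw [h1, Finset.sum_range_succ, Nat.mul_add]
      have h2 : d - i + 1 = d + 1 - i := by omega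
      rw [h2]
    rw [Finset.sum_congr rfl hstep, Finset.sum_add_distrib, ih]
    have hlast : m.choose (d+1) * ∑ j ∈ range (d + 1 - (d+1) + 1), (m - (d+1)).choose j
        = m.choose (d+1) := by
      simp
    rw [hlast]
    have hR : ∑ k ∈ range (d+1+1), 2^k * m.choose k
        = ∑ k ∈ range (d+1), 2^k * m.choose k + 2^(d+1) * m.choose (d+1) :=
      Finset.sum_range_succ _ _
    have hI := buck_inner_id m (d+1)
    rw [Finset.sum_range_succ] at hI
    simp only [Nat.sub_self, Nat.choose_zero_right, mul_one] at hI
    omega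

lemma buck_ge (m d : ℕ) :
    ∑ k ∈ range (d+1), 2^k * m.choose k ≤
      ∑ k ∈ range (d+1), m.choose (d-k) * ∑ j ∈ range (k+1), (m - d + k).choose j := by
  have h1 : ∑ k ∈ range (d+1), m.choose (d-k) * ∑ j ∈ range (k+1), (m - (d-k)).choose j ≤
      ∑ k ∈ range (d+1), m.choose (d-k) * ∑ j ∈ range (k+1), (m - d + k).choose j := by
    refine Finset.sum_le_sum fun k hk => Nat.mul_le_mul_left _ ?_
    exact Finset.sum_le_sum fun j _ => Nat.choose_le_choose j (by omega)
  refine le_trans ?_ h1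
  have h2 := Finset.sum_range_reflect
    (fun k => m.choose k * ∑ j ∈ range (d - k + 1), (m - k).choose j) (d+1)
  simp only [Nat.add_sub_cancel] at h2
  calc ∑ k ∈ range (d+1), 2^k * m.choose k
      = ∑ i ∈ range (d+1), m.choose i * ∑ j ∈ range (d - i + 1), (m - i).choose j :=
        (buck_G_eq m d).symm
    _ = ∑ k ∈ range (d+1), m.choose (d-k) * ∑ j ∈ range (d - (d-k) + 1), (m - (d-k)).choose j :=
        h2.symm
    _ ≤ ∑ k ∈ range (d+1), m.choose (d-k) * ∑ j ∈ range (k+1), (m - (d-k)).choose j := by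
        refine Finset.sum_le_sum fun k hk => Nat.mul_le_mul_left _ ?_
        simp only [mem_range] at hk
        have h3 : d - (d - k) = k := by omega
        rw [h3]

lemma buck_N_succ (m d : ℕ) :
    ∑ k ∈ range (d+2), 2^k * (m+1).choose k
      = ∑ k ∈ range (d+2), 2^k * m.choose k + 2 * ∑ k ∈ range (d+1), 2^k * m.choose k := by
  rw [Finset.sum_range_succ' (fun k => 2^k * (m+1).choose k),
      Finset.sum_range_succ' (fun k => 2^k * m.choose k)]
  simp only [Nat.choose_succ_succ, pow_succ, Nat.mul_add, Nat.add_mul, Nat.choose_zero_right,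
    pow_zero, Finset.sum_add_distrib, Finset.mul_sum, Nat.succ_eq_add_one, mul_one, mul_comm,
    mul_left_comm, mul_assoc]
  omega

lemma buck_N_zero (d : ℕ) : ∑ k ∈ range (d+1), 2^k * Nat.choose 0 k = 1 := by
  induction d with
  | zero => simp
  | succ d ih => rw [Finset.sum_range_succ, ih]; simp

lemma sign_mem (t : ℝ) : Real.sign t = -1 ∨ Real.sign t = 0 ∨ Real.sign t = 1 := by
  rcases lt_trichotomy t 0 with h|h|h
  · exact Or.inl (Real.sign_of_neg h)
  · exact Or.inr (Or.inl (by rw [h, Real.sign_zero]))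
  · exact Or.inr (Or.inr (Real.sign_of_pos h))

lemma signSet_finite (m d : ℕ) (f : Fin m → ((Fin d → ℝ) →ᵃ[ℝ] ℝ)) :
    {σ : Fin m → ℝ | ∃ x : Fin d → ℝ, ∀ i, σ i = Real.sign (f i x)}.Finite := by
  have h3 : ({-1, 0, 1} : Set ℝ).Finite := (Set.finite_singleton 1).insert 0 |>.insert (-1)
  refine Set.Finite.subset (Set.Finite.pi (fun _ : Fin m => h3)) ?_
  rintro σ ⟨x, hx⟩ i -
  rw [hx i]
  rcases sign_mem (f i x) with h|h|h <;> simp [h]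

lemma affine_eval {d : ℕ} (h : (Fin d → ℝ) →ᵃ[ℝ] ℝ) (x v : Fin d → ℝ) :
    h (x + v) = h x + h.linear v := by
  have := h.map_vadd x v
  simp only [vadd_eq_add] at this
  rw [add_comm v x, add_comm (h.linear v) (h x)] at this
  exact this

lemma affine_seg {d : ℕ} (h : (Fin d → ℝ) →ᵃ[ℝ] ℝ) (x y : Fin d → ℝ) (t : ℝ) :
    h (x + t • (y - x)) = h x + t * (h y - h x) := by
  have hyx : x + (y - x) = y := by abel
  have h2 := affine_eval h x (y - x)
  rw [hyx] at h2
  rw [affine_eval h x _, map_smul, smul_eq_mul]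
  have : h.linear (y - x) = h y - h x := by linarith
  rw [this]

lemma sign_seg {p q t : ℝ} (ht0 : 0 ≤ t) (ht1 : t ≤ 1) (h : Real.sign q = Real.sign p) :
    Real.sign (p + t * (q - p)) = Real.sign p := by
  rcases lt_trichotomy p 0 with hp|hp|hp
  · have hq : q < 0 := by
      rcases lt_trichotomy q 0 with h'|h'|h'
      · exact h'
      · rw [Real.sign_of_neg hp, h', Real.sign_zero] at h; norm_num at h
      · rw [Real.sign_of_neg hp, Real.sign_of_pos h'] at h; norm_num at h
    have hz : p + t * (q - p) < 0 := by
      rcases le_total p q with hpq | hpq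
      · nlinarith
      · nlinarith
    rw [Real.sign_of_neg hz, Real.sign_of_neg hp]
  · rw [hp, Real.sign_zero] at h ⊢
    have hq : q = 0 := Real.sign_eq_zero_iff.mp h
    rw [hq]; norm_num
  · have hq : 0 < q := by
      rcases lt_trichotomy q 0 with h'|h'|h'
      · rw [Real.sign_of_pos hp, Real.sign_of_neg h'] at h; norm_num at h
      · rw [Real.sign_of_pos hp, h', Real.sign_zero] at h; norm_num at h
      · exact h'
    have hz : 0 < p + t * (q - p) := by
      rcases le_total p q with hpq | hpq
      · nlinarith
      · nlinarith
    rw [Real.sign_of_pos hz, Real.sign_of_pos hp]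

lemma exists_zero_seg {d : ℕ} (h : (Fin d → ℝ) →ᵃ[ℝ] ℝ) {x y : Fin d → ℝ}
    (hx : 0 < h x) (hy : h y < 0) :
    ∃ t : ℝ, 0 ≤ t ∧ t ≤ 1 ∧ h (x + t • (y - x)) = 0 := by
  have hd : 0 < h x - h y := by linarith
  refine ⟨h x / (h x - h y), div_nonneg hx.le hd.le, (div_le_one hd).mpr (by linarith), ?_⟩
  rw [affine_seg]
  field_simp
  ring

set_option maxHeartbeats 1000000 in
lemma main_bound : ∀ (m : ℕ) (d : ℕ) (f : Fin m → ((Fin d → ℝ) →ᵃ[ℝ] ℝ)),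
    ({σ : Fin m → ℝ | ∃ x : Fin d → ℝ, ∀ i, σ i = Real.sign (f i x)}).ncard
      ≤ ∑ k ∈ range (d+1), 2^k * m.choose k := by
  intro m
  induction m with
  | zero =>
    intro d f
    rw [buck_N_zero]
    refine le_trans (Set.ncard_le_ncard (t := {(fun i => i.elim0 : Fin 0 → ℝ)})
      ?_ (Set.finite_singleton _)) (le_of_eq (Set.ncard_singleton _))
    intro σ _
    simp only [Set.mem_singleton_iff]
    funext i
    exact i.elim0
  | succ m ih =>
    intro d f
    by_cases hL : (f (Fin.last m)).linear = 0
    · -- constant last function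
      have hconst : ∀ x, f (Fin.last m) x = f (Fin.last m) 0 := by
        intro x
        have h1 := affine_eval (f (Fin.last m)) 0 x
        rw [zero_add, hL] at h1
        simpa using h1
      have hsub : {σ : Fin (m+1) → ℝ | ∃ x : Fin d → ℝ, ∀ i, σ i = Real.sign (f i x)} ⊆
          (fun σ' => Fin.snoc σ' (Real.sign (f (Fin.last m) 0))) ''
            {σ : Fin m → ℝ | ∃ x : Fin d → ℝ, ∀ i, σ i = Real.sign (f i.castSucc x)} := by
        rintro σ ⟨x, hx⟩
        refine ⟨Fin.init σ, ⟨x, fun i => hx i.castSucc⟩, ?_⟩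
        have h2 : Real.sign (f (Fin.last m) 0) = σ (Fin.last m) := by
          rw [hx (Fin.last m), hconst x]
        rw [h2]
        exact Fin.snoc_init_self σ
      calc ({σ : Fin (m+1) → ℝ | ∃ x : Fin d → ℝ, ∀ i, σ i = Real.sign (f i x)}).ncard
          ≤ _ := Set.ncard_le_ncard hsub
            ((signSet_finite m d (fun i => f i.castSucc)).image _)
        _ ≤ _ := Set.ncard_image_le (signSet_finite m d (fun i => f i.castSucc))
        _ ≤ ∑ k ∈ range (d+1), 2^k * m.choose k := ih d (fun i => f i.castSucc)
        _ ≤ ∑ k ∈ range (d+1), 2^k * (m+1).choose k :=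
            Finset.sum_le_sum fun k _ =>
              Nat.mul_le_mul_left _ (Nat.choose_le_choose k (Nat.le_succ m))
    · -- last function has nonzero linear part
      rcases d with _ | e
      · exact absurd (LinearMap.ext fun x => by
          rw [Subsingleton.elim x (0 : Fin 0 → ℝ), map_zero, LinearMap.zero_apply]) hL
      obtain ⟨v, hv⟩ : ∃ v, (f (Fin.last m)).linear v ≠ 0 := by
        by_contra hc
        push_neg at hc
        exact hL (LinearMap.ext fun x => by simp [hc])
      have hx0 : f (Fin.last m)
          ((-(f (Fin.last m) 0) / (f (Fin.last m)).linear v) • v) = 0 := by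
        have h1 := affine_eval (f (Fin.last m)) 0
          ((-(f (Fin.last m) 0) / (f (Fin.last m)).linear v) • v)
        rw [zero_add] at h1
        rw [h1, map_smul, smul_eq_mul, div_mul_cancel₀ _ hv]
        ring
      set x0 : Fin (e+1) → ℝ := (-(f (Fin.last m) 0) / (f (Fin.last m)).linear v) • v with hx0def
      have hker : Module.finrank ℝ (Fin e → ℝ)
          = Module.finrank ℝ (LinearMap.ker (f (Fin.last m)).linear) := by
        have h1 : Module.finrank ℝ (LinearMap.ker (f (Fin.last m)).linear) + 1
            = Module.finrank ℝ (Fin (e+1) → ℝ) :=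
          Module.Dual.finrank_ker_add_one_of_ne_zero hL
        rw [Module.finrank_fin_fun] at h1
        rw [Module.finrank_fin_fun]
        omega
      obtain ⟨φ⟩ := FiniteDimensional.nonempty_linearEquiv_of_finrank_eq hker
      set E : (Fin e → ℝ) →ᵃ[ℝ] (Fin (e+1) → ℝ) :=
        AffineMap.mk' (fun y => x0 + ((φ y : LinearMap.ker (f (Fin.last m)).linear)
            : Fin (e+1) → ℝ))
          ((LinearMap.ker (f (Fin.last m)).linear).subtype ∘ₗ
            (φ : (Fin e → ℝ) →ₗ[ℝ] LinearMap.ker (f (Fin.last m)).linear)) 0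
          (fun p => by
            simp only [vsub_eq_sub, sub_zero, vadd_eq_add, LinearMap.coe_comp,
              Function.comp_apply, Submodule.coe_subtype, LinearEquiv.coe_coe, map_zero,
              ZeroMemClass.coe_zero, add_zero]
            abel) with hEdef
      have hE : ∀ y, E y = x0 + ((φ y : LinearMap.ker (f (Fin.last m)).linear)
          : Fin (e+1) → ℝ) := fun y => rfl
      have hE0 : ∀ y, f (Fin.last m) (E y) = 0 := by
        intro y
        rw [hE, affine_eval, hx0]
        have h2 : (f (Fin.last m)).linear
            ((φ y : LinearMap.ker (f (Fin.last m)).linear) : Fin (e+1) → ℝ) = 0 := (φ y).2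
        rw [h2, add_zero]
      have hEsurj : ∀ x : Fin (e+1) → ℝ, f (Fin.last m) x = 0 → ∃ y, E y = x := by
        intro x hx
        have hmem : x - x0 ∈ LinearMap.ker (f (Fin.last m)).linear := by
          rw [LinearMap.mem_ker]
          have h2 := affine_eval (f (Fin.last m)) x0 (x - x0)
          have h3 : x0 + (x - x0) = x := by abel
          rw [h3, hx, hx0] at h2
          linarith
        refine ⟨φ.symm ⟨x - x0, hmem⟩, ?_⟩
        rw [hE, LinearEquiv.apply_symm_apply]
        show x0 + (x - x0) = x
        abel
      -- key lemma: two realizations with different last signs give a point on the hyperplane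
      have hkey : ∀ x y : Fin (e+1) → ℝ,
          Real.sign (f (Fin.last m) x) ≠ Real.sign (f (Fin.last m) y) →
          (∀ i : Fin m, Real.sign (f i.castSucc x) = Real.sign (f i.castSucc y)) →
          ∃ z : Fin (e+1) → ℝ, f (Fin.last m) z = 0 ∧
            ∀ i : Fin m, Real.sign (f i.castSucc z) = Real.sign (f i.castSucc x) := by
        intro x y hne hsame
        rcases lt_trichotomy (f (Fin.last m) x) 0 with ha|ha|ha
        · rcases lt_trichotomy (f (Fin.last m) y) 0 with hb|hb|hb
          · exact absurd (by rw [Real.sign_of_neg ha, Real.sign_of_neg hb]) hne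
          · exact ⟨y, hb, fun i => (hsame i).symm⟩
          · obtain ⟨t, ht0, ht1, htz⟩ := exists_zero_seg (f (Fin.last m)) hb ha
            refine ⟨y + t • (x - y), htz, fun i => ?_⟩
            rw [affine_seg (f i.castSucc) y x t, sign_seg ht0 ht1 (hsame i), hsame i]
        · exact ⟨x, ha, fun i => rfl⟩
        · rcases lt_trichotomy (f (Fin.last m) y) 0 with hb|hb|hb
          · obtain ⟨t, ht0, ht1, htz⟩ := exists_zero_seg (f (Fin.last m)) ha hb
            refine ⟨x + t • (y - x), htz, fun i => ?_⟩
            rw [affine_seg (f i.castSucc) x y t, sign_seg ht0 ht1 (hsame i).symm]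
          · exact ⟨y, hb, fun i => (hsame i).symm⟩
          · exact absurd (by rw [Real.sign_of_pos ha, Real.sign_of_pos hb]) hne
      -- the sets
      set A : Set (Fin (m+1) → ℝ) :=
        {σ | ∃ x : Fin (e+1) → ℝ, ∀ i, σ i = Real.sign (f i x)} with hA
      set A' : Set (Fin m → ℝ) :=
        {σ | ∃ x : Fin (e+1) → ℝ, ∀ i, σ i = Real.sign (f i.castSucc x)} with hA'
      set A0 : Set (Fin m → ℝ) :=
        {σ | ∃ x : Fin (e+1) → ℝ, f (Fin.last m) x = 0 ∧
          ∀ i, σ i = Real.sign (f i.castSucc x)} with hA0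
      have hAfin : A.Finite := signSet_finite _ _ f
      have hA'fin : A'.Finite := signSet_finite _ _ (fun i => f i.castSucc)
      have hA0sub : A0 ⊆ A' := by rintro σ ⟨x, _, hx⟩; exact ⟨x, hx⟩
      have hA0fin : A0.Finite := hA'fin.subset hA0sub
      set A1 : Set (Fin (m+1) → ℝ) := {σ ∈ A | Fin.init σ ∉ A0} with hA1
      set A2 : Set (Fin (m+1) → ℝ) := {σ ∈ A | Fin.init σ ∈ A0} with hA2
      have hA1sub : A1 ⊆ A := fun σ h => h.1
      have hA2sub : A2 ⊆ A := fun σ h => h.1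
      have hsplit : A ⊆ A1 ∪ A2 := by
        intro σ hσ
        by_cases h : Fin.init σ ∈ A0
        · exact Or.inr ⟨hσ, h⟩
        · exact Or.inl ⟨hσ, h⟩
      have hinit_mem : ∀ σ ∈ A, Fin.init σ ∈ A' := by
        rintro σ ⟨x, hx⟩
        exact ⟨x, fun i => hx i.castSucc⟩
      have hA1card : A1.ncard ≤ (A' \ A0).ncard := by
        refine Set.ncard_le_ncard_of_injOn Fin.init ?_ ?_ (hA'fin.diff (t := A0))
        · rintro σ ⟨hσA, hσ0⟩
          exact ⟨hinit_mem σ hσA, hσ0⟩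
        · rintro σ ⟨⟨x, hx⟩, hσ0⟩ τ ⟨⟨y, hy⟩, hτ0⟩ hinit
          have hsame : ∀ i : Fin m,
              Real.sign (f i.castSucc x) = Real.sign (f i.castSucc y) := by
            intro i
            have h1 : σ i.castSucc = τ i.castSucc := congrFun hinit i
            rw [hx i.castSucc, hy i.castSucc] at h1
            exact h1
          funext i
          induction i using Fin.lastCases with
          | cast i => exact congrFun hinit i
          | last =>
            by_contra hne'
            rw [hx (Fin.last m), hy (Fin.last m)] at hne'
            obtain ⟨z, hz0, hz⟩ := hkey x y hne' hsame
            apply hσ0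
            refine ⟨z, hz0, fun i => ?_⟩
            show σ i.castSucc = _
            rw [hx i.castSucc, hz i]
      have hA2card : A2.ncard ≤ 3 * A0.ncard := by
        have hsub2 : A2 ⊆ (fun σ' : Fin m → ℝ => (Fin.snoc σ' (-1 : ℝ) : Fin (m+1) → ℝ)) '' A0 ∪
            ((fun σ' : Fin m → ℝ => (Fin.snoc σ' (0 : ℝ) : Fin (m+1) → ℝ)) '' A0 ∪ (fun σ' : Fin m → ℝ => (Fin.snoc σ' (1 : ℝ) : Fin (m+1) → ℝ)) '' A0) := by
          rintro σ ⟨⟨x, hx⟩, hσ0⟩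
          have hs := sign_mem (f (Fin.last m) x)
          rw [← hx (Fin.last m)] at hs
          rcases hs with h|h|h
          · exact Or.inl ⟨Fin.init σ, hσ0, by rw [← h]; exact Fin.snoc_init_self σ⟩
          · exact Or.inr (Or.inl ⟨Fin.init σ, hσ0, by rw [← h]; exact Fin.snoc_init_self σ⟩)
          · exact Or.inr (Or.inr ⟨Fin.init σ, hσ0, by rw [← h]; exact Fin.snoc_init_self σ⟩)
        have hu1 := Set.ncard_union_le ((fun σ' : Fin m → ℝ => (Fin.snoc σ' (-1 : ℝ) : Fin (m+1) → ℝ)) '' A0)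
          ((fun σ' : Fin m → ℝ => (Fin.snoc σ' (0 : ℝ) : Fin (m+1) → ℝ)) '' A0 ∪ (fun σ' : Fin m → ℝ => (Fin.snoc σ' (1 : ℝ) : Fin (m+1) → ℝ)) '' A0)
        have hu2 := Set.ncard_union_le ((fun σ' : Fin m → ℝ => (Fin.snoc σ' (0 : ℝ) : Fin (m+1) → ℝ)) '' A0)
          ((fun σ' : Fin m → ℝ => (Fin.snoc σ' (1 : ℝ) : Fin (m+1) → ℝ)) '' A0)
        have hmain := Set.ncard_le_ncard hsub2
          ((hA0fin.image _).union ((hA0fin.image _).union (hA0fin.image _)))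
        have e1 : ((fun σ' : Fin m → ℝ => (Fin.snoc σ' (-1 : ℝ) : Fin (m+1) → ℝ)) '' A0).ncard ≤ A0.ncard :=
          Set.ncard_image_le hA0fin
        have e2 : ((fun σ' : Fin m → ℝ => (Fin.snoc σ' (0 : ℝ) : Fin (m+1) → ℝ)) '' A0).ncard ≤ A0.ncard :=
          Set.ncard_image_le hA0fin
        have e3 : ((fun σ' : Fin m → ℝ => (Fin.snoc σ' (1 : ℝ) : Fin (m+1) → ℝ)) '' A0).ncard ≤ A0.ncard :=
          Set.ncard_image_le hA0fin
        omega
      have hA0card : A0.ncard ≤ ∑ k ∈ range (e+1), 2^k * m.choose k := by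
        refine le_trans (Set.ncard_le_ncard ?_
          (signSet_finite m e (fun i => (f i.castSucc).comp E)))
          (ih e (fun i => (f i.castSucc).comp E))
        rintro σ ⟨x, hx0', hx⟩
        obtain ⟨y, hy⟩ := hEsurj x hx0'
        refine ⟨y, fun i => ?_⟩
        rw [hx i, ← hy]
        rfl
      have hdiff : (A' \ A0).ncard = A'.ncard - A0.ncard := Set.ncard_diff hA0sub hA0fin
      have hle : A0.ncard ≤ A'.ncard := Set.ncard_le_ncard hA0sub hA'fin
      have hA'card : A'.ncard ≤ ∑ k ∈ range (e+1+1), 2^k * m.choose k :=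
        ih (e+1) (fun i => f i.castSucc)
      have hunion : A.ncard ≤ A1.ncard + A2.ncard :=
        le_trans (Set.ncard_le_ncard hsplit
          ((hAfin.subset hA1sub).union (hAfin.subset hA2sub))) (Set.ncard_union_le _ _)
      calc A.ncard ≤ A1.ncard + A2.ncard := hunion
        _ ≤ (A'.ncard - A0.ncard) + 3 * A0.ncard := by
            rw [← hdiff]; exact Nat.add_le_add hA1card hA2card
        _ ≤ A'.ncard + 2 * A0.ncard := by omega
        _ ≤ (∑ k ∈ range (e+1+1), 2^k * m.choose k)
              + 2 * ∑ k ∈ range (e+1), 2^k * m.choose k :=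
            Nat.add_le_add hA'card (Nat.mul_le_mul_left 2 hA0card)
        _ = ∑ k ∈ range (e+2), 2^k * (m+1).choose k := (buck_N_succ m e).symm

open Finset in
/-- The number of sign vectors realized by `m` affine functions on `ℝ^d` is at most
`∑_{k=0}^{d} C(m, d-k) · ∑_{j=0}^{k} C(m-d+k, j)` (Buck's bound on the number of
faces of an arrangement of `m` hyperplanes in `ℝ^d`). -/
theorem sign_vectors_of_affine_bound (m d : ℕ)
    (f : Fin m → ((Fin d → ℝ) →ᵃ[ℝ] ℝ)) :
    Set.ncard {σ : Fin m → ℝ | ∃ x : Fin d → ℝ, ∀ i, σ i = Real.sign (f i x)} ≤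
      ∑ k ∈ Finset.range (d + 1), (m.choose (d - k)) *
        ∑ j ∈ Finset.range (k + 1), ((m - d + k).choose j) := by
  exact le_trans (main_bound m d f) (buck_ge m d)
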